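/- arXiv:2006.08099 — 5 statements merged into one kernel-verified Lean document; each statement's English description precedes it below -/
import Mathlib

section
/- (Lemma 1.) Suppose V** = (V_1**,…,V_K**) is a precoder with P(V**) > 0 such that R̃(V**) ≥ R̃(V) for every precoder V with P(V) > 0 (i.e., V** globally maximizes the unconstrained power-normalized sum-rate). Set α = √(P_T / P(V**)) and let αV** = (αV_1**,…,αV_K**). Then P(αV**) = P_T, and for every precoder V with P(V) ≤ P_T one has R(V) ≤ R(αV**); that is, αV** globally maximizes the sum-rate R subject to the power constraint P(V) ≤ P_T. -/
open Matrix Finset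
open scoped Matrix

/-- Total transmit power `P(V) = Σₖ Re Tr(Vₖ Vₖᴴ)`. -/
noncomputable def totalPower {K Nt d : ℕ}
    (V : Fin K → Matrix (Fin Nt) (Fin d) ℂ) : ℝ :=
  ∑ k : Fin K, (Matrix.trace (V k * (V k)ᴴ)).re

/-- Interference-plus-signal covariance `Σ_{m ∈ S} Hₖ Vₘ Vₘᴴ Hₖᴴ`. -/
noncomputable def covSum {K Nt Nr d : ℕ}
    (H : Matrix (Fin Nr) (Fin Nt) ℂ) (V : Fin K → Matrix (Fin Nt) (Fin d) ℂ)
    (S : Finset (Fin K)) : Matrix (Fin Nr) (Fin Nr) ℂ :=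
  ∑ m ∈ S, H * V m * (V m)ᴴ * Hᴴ

/-- Generic weighted sum-rate with per-user noise levels `τ k` in place of `σₖ²`:
`Σₖ ωₖ [log det(τₖ I + Σₘ Hₖ Vₘ Vₘᴴ Hₖᴴ) − log det(τₖ I + Σ_{m≠k} Hₖ Vₘ Vₘᴴ Hₖᴴ)]`. -/
noncomputable def sumRateGen {K Nt Nr d : ℕ}
    (H : Fin K → Matrix (Fin Nr) (Fin Nt) ℂ) (ω : Fin K → ℝ) (τ : Fin K → ℝ)
    (V : Fin K → Matrix (Fin Nt) (Fin d) ℂ) : ℝ :=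
  ∑ k : Fin K, ω k *
    (Real.log ((τ k : ℂ) • (1 : Matrix (Fin Nr) (Fin Nr) ℂ) + covSum (H k) V Finset.univ).det.re
      - Real.log ((τ k : ℂ) • (1 : Matrix (Fin Nr) (Fin Nr) ℂ)
          + covSum (H k) V (Finset.univ.erase k)).det.re)

/-- The sum-rate `R(V)` of the power-constrained problem. -/
noncomputable def sumRate {K Nt Nr d : ℕ}
    (H : Fin K → Matrix (Fin Nr) (Fin Nt) ℂ) (ω σ : Fin K → ℝ)
    (V : Fin K → Matrix (Fin Nt) (Fin d) ℂ) : ℝ :=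
  sumRateGen H ω (fun k => σ k ^ 2) V

/-- The power-normalized sum-rate `R̃(V)` of the unconstrained problem, in which
`σₖ²` is replaced by `σₖ² P(V)/P_T`. -/
noncomputable def sumRateNorm {K Nt Nr d : ℕ}
    (H : Fin K → Matrix (Fin Nr) (Fin Nt) ℂ) (ω σ : Fin K → ℝ) (PT : ℝ)
    (V : Fin K → Matrix (Fin Nt) (Fin d) ℂ) : ℝ :=
  sumRateGen H ω (fun k => σ k ^ 2 * totalPower V / PT) V


open scoped ComplexOrder

namespace SumRateAux


variable {n : ℕ}

lemma smul_one_posDef {r : ℝ} (hr : 0 < r) :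
    ((r : ℂ) • (1 : Matrix (Fin n) (Fin n) ℂ)).PosDef := by
  refine Matrix.PosDef.of_dotProduct_mulVec_pos ?_ ?_
  · simp [Matrix.IsHermitian, Matrix.conjTranspose_smul, Complex.star_def, Complex.conj_ofReal]
  · intro x hx
    simp only [Matrix.smul_mulVec, Matrix.one_mulVec, dotProduct_smul,
      smul_eq_mul]
    exact mul_pos (by exact_mod_cast hr) (Matrix.dotProduct_star_self_pos_iff.mpr hx)

lemma smul_posSemidef {r : ℝ} (hr : 0 ≤ r) {A : Matrix (Fin n) (Fin n) ℂ}
    (hA : A.PosSemidef) : ((r : ℂ) • A).PosSemidef := by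
  refine Matrix.PosSemidef.of_dotProduct_mulVec_nonneg ?_ ?_
  · show ((r : ℂ) • A)ᴴ = _
    rw [Matrix.conjTranspose_smul, hA.1.eq, Complex.star_def, Complex.conj_ofReal]
  · intro x
    simp only [Matrix.smul_mulVec, dotProduct_smul, smul_eq_mul]
    exact mul_nonneg (by exact_mod_cast hr) (hA.dotProduct_mulVec_nonneg x)

lemma posDef_sq {Y : Matrix (Fin n) (Fin n) ℂ} (hY : Y.PosDef) : (Y * Y).PosDef := by
  have hinj : Function.Injective (Y.mulVec) :=
    Matrix.mulVec_injective_iff_isUnit.mpr ((Matrix.isUnit_iff_isUnit_det _).2 hY.det_pos.ne'.isUnit)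
  refine Matrix.PosDef.of_dotProduct_mulVec_pos ?_ ?_
  · simp [Matrix.IsHermitian, Matrix.conjTranspose_mul, hY.1.eq]
  · intro x hx
    have hYx : Y *ᵥ x ≠ 0 := by
      intro h
      exact hx (hinj (by simpa using h))
    have : star x ⬝ᵥ ((Y * Y) *ᵥ x) = star (Y *ᵥ x) ⬝ᵥ (Y *ᵥ x) := by
      rw [← Matrix.mulVec_mulVec, Matrix.dotProduct_mulVec, Matrix.star_mulVec, hY.1.eq]
    rw [this]
    exact Matrix.dotProduct_star_self_pos_iff.mpr hYx


/-- The quadratic form of the inverse. -/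
noncomputable def qf (Y : Matrix (Fin n) (Fin n) ℂ) (w : Fin n → ℂ) : ℂ :=
  star w ⬝ᵥ (Y⁻¹ *ᵥ w)

lemma qf_nonneg {Y : Matrix (Fin n) (Fin n) ℂ} (hY : Y.PosDef) (w : Fin n → ℂ) :
    0 ≤ qf Y w :=
  hY.inv.posSemidef.dotProduct_mulVec_nonneg w

lemma inv_sub_inv_eq {Y : Matrix (Fin n) (Fin n) ℂ} (hY : Y.PosDef) {r : ℝ} (hr : 0 ≤ r) :
    Y⁻¹ - (Y + (r : ℂ) • 1)⁻¹ = (r : ℂ) • (Y⁻¹ * (Y + (r : ℂ) • 1)⁻¹) := by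
  set Z : Matrix (Fin n) (Fin n) ℂ := Y + (r : ℂ) • 1 with hZdef
  have hZ : Z.PosDef := hY.add_posSemidef (smul_posSemidef hr Matrix.PosSemidef.one)
  have hYu : IsUnit Y.det := hY.det_pos.ne'.isUnit
  have hZu : IsUnit Z.det := hZ.det_pos.ne'.isUnit
  symm
  calc (r : ℂ) • (Y⁻¹ * Z⁻¹) = Y⁻¹ * (((r : ℂ) • 1) * Z⁻¹) := by
        rw [Matrix.smul_mul, Matrix.one_mul, Matrix.mul_smul]
    _ = Y⁻¹ * ((Z - Y) * Z⁻¹) := by rw [hZdef, add_sub_cancel_left]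
    _ = Y⁻¹ * (Z * Z⁻¹) - (Y⁻¹ * Y) * Z⁻¹ := by
        rw [Matrix.sub_mul, Matrix.mul_sub, Matrix.mul_assoc]
    _ = Y⁻¹ - Z⁻¹ := by
        rw [Matrix.mul_nonsing_inv _ hZu, Matrix.nonsing_inv_mul _ hYu,
          Matrix.mul_one, Matrix.one_mul]

lemma qf_mono {Y : Matrix (Fin n) (Fin n) ℂ} (hY : Y.PosDef) {r : ℝ} (hr : 0 ≤ r)
    (w : Fin n → ℂ) : qf (Y + (r : ℂ) • 1) w ≤ qf Y w := by
  set Z : Matrix (Fin n) (Fin n) ℂ := Y + (r : ℂ) • 1 with hZdef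
  have hZ : Z.PosDef := hY.add_posSemidef (smul_posSemidef hr Matrix.PosSemidef.one)
  have hZY : (Z * Y).PosDef := by
    have : Z * Y = Y * Y + (r : ℂ) • Y := by
      rw [hZdef, Matrix.add_mul, Matrix.smul_mul, Matrix.one_mul]
    rw [this]
    exact (posDef_sq hY).add_posSemidef (smul_posSemidef hr hY.posSemidef)
  have hpsd : (Y⁻¹ - Z⁻¹).PosSemidef := by
    rw [inv_sub_inv_eq hY hr, ← hZdef, ← Matrix.mul_inv_rev]
    exact smul_posSemidef hr hZY.inv.posSemidef
  have h0 := hpsd.dotProduct_mulVec_nonneg w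
  rw [Matrix.sub_mulVec, dotProduct_sub, sub_nonneg] at h0
  exact h0

/-- Matrix determinant lemma, specialized. -/
lemma det_add_vecMulVec {Y : Matrix (Fin n) (Fin n) ℂ} (hY : Y.PosDef) (w : Fin n → ℂ) :
    (Y + Matrix.vecMulVec w (star w)).det = Y.det * (1 + qf Y w) := by
  have hYu : IsUnit Y.det := hY.det_pos.ne'.isUnit
  rw [Matrix.vecMulVec_eq Unit, Matrix.det_add_replicateCol_mul_replicateRow hYu]
  congr 1
  have : (1 + Matrix.replicateRow Unit (star w) * Y⁻¹ * Matrix.replicateCol Unit w).det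
      = ((1 + Matrix.replicateRow Unit (star w) * Y⁻¹ * Matrix.replicateCol Unit w : Matrix Unit Unit ℂ))
        default default :=
    Matrix.det_unique _
  rw [this, Matrix.add_apply, Matrix.one_apply_eq]
  congr 1
  rw [qf]
  simp only [Matrix.mul_apply, Matrix.replicateRow_apply, Matrix.replicateCol_apply, Matrix.mulVec,
    dotProduct, Finset.mul_sum, Finset.sum_mul]
  rw [Finset.sum_comm]
  exact Finset.sum_congr rfl fun i _ => Finset.sum_congr rfl fun j _ => by ring


lemma det_re_pos {M : Matrix (Fin n) (Fin n) ℂ} (hM : M.PosDef) : 0 < M.det.re :=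
  (Complex.lt_def.mp hM.det_pos).1

lemma det_eq_re {M : Matrix (Fin n) (Fin n) ℂ} (hM : M.PosDef) : M.det = (M.det.re : ℂ) := by
  have h := (Complex.lt_def.mp hM.det_pos).2
  exact Complex.ext rfl (by simpa using h.symm)

lemma re_eq_of_nonneg {z : ℂ} (hz : 0 ≤ z) : z = (z.re : ℂ) := by
  have h := (Complex.le_def.mp hz).2
  exact Complex.ext rfl (by simpa using h.symm)

lemma det_add_vecMulVec_re {Y : Matrix (Fin n) (Fin n) ℂ} (hY : Y.PosDef) (w : Fin n → ℂ) :
    (Y + Matrix.vecMulVec w (star w)).det.re = Y.det.re * (1 + (qf Y w).re) := by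
  rw [det_add_vecMulVec hY w, det_eq_re hY, re_eq_of_nonneg (qf_nonneg hY w)]
  simp

lemma vecMulVec_posSemidef (w : Fin n → ℂ) : (Matrix.vecMulVec w (star w)).PosSemidef := by
  refine Matrix.PosSemidef.of_dotProduct_mulVec_nonneg ?_ ?_
  · show _ᴴ = _
    ext i j
    simp [Matrix.vecMulVec_apply, Matrix.conjTranspose_apply, mul_comm]
  · intro x
    have : Matrix.vecMulVec w (star w) *ᵥ x = (star w ⬝ᵥ x) • w := by
      ext i
      simp only [Matrix.mulVec, Matrix.vecMulVec_apply, dotProduct, Pi.smul_apply,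
        smul_eq_mul, Finset.sum_mul, Finset.mul_sum, Pi.star_apply, Complex.star_def]
      exact Finset.sum_congr rfl fun j _ => by ring
    rw [this]
    have : star x ⬝ᵥ ((star w ⬝ᵥ x) • w) = star (star w ⬝ᵥ x) * (star w ⬝ᵥ x) := by
      rw [dotProduct_smul, smul_eq_mul, ← Matrix.star_dotProduct]
      ring
    rw [this]
    exact star_mul_self_nonneg _

/-- Key step: adding a rank-one PSD update decreases `det (Y + rI)/det Y`. -/
lemma step_ineq {Y : Matrix (Fin n) (Fin n) ℂ} (hY : Y.PosDef) {r : ℝ} (hr : 0 ≤ r)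
    (w : Fin n → ℂ) :
    (Y + (r : ℂ) • 1 + Matrix.vecMulVec w (star w)).det.re * Y.det.re ≤
      (Y + Matrix.vecMulVec w (star w)).det.re * (Y + (r : ℂ) • 1).det.re := by
  have hZ : (Y + (r : ℂ) • 1).PosDef := hY.add_posSemidef (smul_posSemidef hr Matrix.PosSemidef.one)
  rw [det_add_vecMulVec_re hZ w, det_add_vecMulVec_re hY w]
  have h1 : 0 ≤ (qf Y w).re := (Complex.le_def.mp (qf_nonneg hY w)).1
  have h2 : (qf (Y + (r : ℂ) • 1) w).re ≤ (qf Y w).re :=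
    (Complex.le_def.mp (qf_mono hY hr w)).1
  have hdY : 0 < Y.det.re := det_re_pos hY
  have hdZ : 0 < (Y + (r : ℂ) • 1).det.re := det_re_pos hZ
  nlinarith [mul_pos hdY hdZ]


lemma posSemidef_sum {ι : Type*} (S : Finset ι) (f : ι → Matrix (Fin n) (Fin n) ℂ)
    (h : ∀ i ∈ S, (f i).PosSemidef) : (∑ i ∈ S, f i).PosSemidef := by
  classical
  induction S using Finset.induction with
  | empty => simpa using (Matrix.PosSemidef.zero (n := Fin n) (R := ℂ))
  | insert _ _ hx ih =>
    rw [Finset.sum_insert hx]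
    exact (h _ (Finset.mem_insert_self _ _)).add (ih fun i hi => h i (Finset.mem_insert_of_mem hi))

lemma psd_decomp {B : Matrix (Fin n) (Fin n) ℂ} (hB : B.PosSemidef) :
    ∃ w : Fin n → Fin n → ℂ, B = ∑ i : Fin n, Matrix.vecMulVec (w i) (star (w i)) := by
  open scoped MatrixOrder in
  obtain ⟨L, rfl⟩ := CStarAlgebra.nonneg_iff_eq_star_mul_self.mp hB.nonneg
  refine ⟨fun i => star (L i), ?_⟩
  ext j k
  simp [Matrix.mul_apply, Matrix.sum_apply, Matrix.vecMulVec_apply, Matrix.conjTranspose_apply]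

lemma posDef_smul_one_add {τ : ℝ} (hτ : 0 < τ) {C : Matrix (Fin n) (Fin n) ℂ}
    (hC : C.PosSemidef) : (((τ : ℂ)) • 1 + C).PosDef :=
  (smul_one_posDef hτ).add_posSemidef hC

lemma dpos {τ : ℝ} (hτ : 0 < τ) {C : Matrix (Fin n) (Fin n) ℂ} (hC : C.PosSemidef) :
    0 < (((τ : ℂ)) • 1 + C).det.re :=
  det_re_pos (posDef_smul_one_add hτ hC)

/-- Monotonicity of the determinant under adding a PSD matrix. -/
lemma det_re_mono {τ : ℝ} (hτ : 0 < τ) {A B : Matrix (Fin n) (Fin n) ℂ}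
    (hA : A.PosSemidef) (hB : B.PosSemidef) :
    (((τ : ℂ)) • 1 + A).det.re ≤ (((τ : ℂ)) • 1 + (A + B)).det.re := by
  classical
  obtain ⟨w, rfl⟩ := psd_decomp hB
  have key : ∀ S : Finset (Fin n),
      (((τ : ℂ)) • 1 + A).det.re ≤
        (((τ : ℂ)) • 1 + (A + ∑ i ∈ S, Matrix.vecMulVec (w i) (star (w i)))).det.re := by
    intro S
    induction S using Finset.induction with
    | empty => simp
    | @insert a S ha ih =>
      set A' := A + ∑ i ∈ S, Matrix.vecMulVec (w i) (star (w i)) with hA'def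
      have hA' : A'.PosSemidef :=
        hA.add (posSemidef_sum S _ fun i _ => vecMulVec_posSemidef (w i))
      have hY : (((τ : ℂ)) • 1 + A').PosDef := posDef_smul_one_add hτ hA'
      have hrw : ((τ : ℂ)) • 1 + (A + ∑ i ∈ insert a S, Matrix.vecMulVec (w i) (star (w i)))
          = (((τ : ℂ)) • 1 + A') + Matrix.vecMulVec (w a) (star (w a)) := by
        rw [Finset.sum_insert ha, hA'def]
        abel
      rw [hrw, det_add_vecMulVec_re hY]
      have h1 : 0 ≤ (qf (((τ : ℂ)) • 1 + A') (w a)).re := (Complex.le_def.mp (qf_nonneg hY _)).1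
      nlinarith [det_re_pos hY, ih]
  exact key Finset.univ

/-- The central inequality: the log-det rate difference is monotone in the noise level. -/
lemma det_pair_ineq {A B : Matrix (Fin n) (Fin n) ℂ} (hA : A.PosSemidef) (hB : B.PosSemidef)
    {s t : ℝ} (hs : 0 < s) (hst : s ≤ t) :
    (((t : ℂ)) • 1 + (A + B)).det.re * (((s : ℂ)) • 1 + A).det.re ≤
      (((s : ℂ)) • 1 + (A + B)).det.re * (((t : ℂ)) • 1 + A).det.re := by
  classical
  have ht : 0 < t := lt_of_lt_of_le hs hst
  have hr : 0 ≤ t - s := sub_nonneg.mpr hst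
  obtain ⟨w, rfl⟩ := psd_decomp hB
  have key : ∀ S : Finset (Fin n),
      (((t : ℂ)) • 1 + (A + ∑ i ∈ S, Matrix.vecMulVec (w i) (star (w i)))).det.re *
          (((s : ℂ)) • 1 + A).det.re ≤
        (((s : ℂ)) • 1 + (A + ∑ i ∈ S, Matrix.vecMulVec (w i) (star (w i)))).det.re *
          (((t : ℂ)) • 1 + A).det.re := by
    intro S
    induction S using Finset.induction with
    | empty => simp [mul_comm]
    | @insert a S ha ih =>
      set A' := A + ∑ i ∈ S, Matrix.vecMulVec (w i) (star (w i)) with hA'def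
      have hA' : A'.PosSemidef :=
        hA.add (posSemidef_sum S _ fun i _ => vecMulVec_posSemidef (w i))
      set Y := ((s : ℂ)) • 1 + A' with hYdef
      have hY : Y.PosDef := posDef_smul_one_add hs hA'
      have hshift : Y + (((t - s : ℝ) : ℂ)) • 1 = ((t : ℂ)) • 1 + A' := by
        rw [hYdef, Complex.ofReal_sub, sub_smul]
        abel
      have hstep := step_ineq hY hr (w a)
      rw [hshift] at hstep
      have hsum : A + ∑ i ∈ insert a S, Matrix.vecMulVec (w i) (star (w i))
          = A' + Matrix.vecMulVec (w a) (star (w a)) := by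
        rw [Finset.sum_insert ha, hA'def]
        abel
      have hrw1 : ((t : ℂ)) • 1 + (A' + Matrix.vecMulVec (w a) (star (w a)))
          = (((t : ℂ)) • 1 + A') + Matrix.vecMulVec (w a) (star (w a)) := by abel
      have hrw2 : ((s : ℂ)) • 1 + (A' + Matrix.vecMulVec (w a) (star (w a)))
          = Y + Matrix.vecMulVec (w a) (star (w a)) := by rw [hYdef]; abel
      rw [hsum, hrw1, hrw2]
      -- combine hstep and ih
      have hYpos : 0 < Y.det.re := det_re_pos hY
      have htA' : 0 < (((t : ℂ)) • 1 + A').det.re := dpos ht hA'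
      have hsA : 0 < (((s : ℂ)) • 1 + A).det.re := dpos hs hA
      have htA : 0 < (((t : ℂ)) • 1 + A).det.re := dpos ht hA
      have haw : 0 < ((((t : ℂ)) • 1 + A') + Matrix.vecMulVec (w a) (star (w a))).det.re := by
        have : (((t : ℂ)) • 1 + A') + Matrix.vecMulVec (w a) (star (w a))
            = ((t : ℂ)) • 1 + (A' + Matrix.vecMulVec (w a) (star (w a))) := by abel
        rw [this]
        exact dpos ht (hA'.add (vecMulVec_posSemidef (w a)))
      rw [hYdef] at hstep ih ⊢
      nlinarith [hstep, ih, mul_pos hYpos htA']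
  exact key Finset.univ


lemma log_pair_ineq {A B : Matrix (Fin n) (Fin n) ℂ} (hA : A.PosSemidef) (hB : B.PosSemidef)
    {s t : ℝ} (hs : 0 < s) (hst : s ≤ t) :
    Real.log (((t : ℂ) • 1 + (A + B)).det.re) - Real.log (((t : ℂ) • 1 + A).det.re) ≤
      Real.log (((s : ℂ) • 1 + (A + B)).det.re) - Real.log (((s : ℂ) • 1 + A).det.re) := by
  have ht : 0 < t := lt_of_lt_of_le hs hst
  have h1 := dpos ht (hA.add hB)
  have h2 := dpos hs hA
  have h3 := dpos hs (hA.add hB)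
  have h4 := dpos ht hA
  have hlog := Real.log_le_log (mul_pos h1 h2) (det_pair_ineq hA hB hs hst)
  rw [Real.log_mul h1.ne' h2.ne', Real.log_mul h3.ne' h4.ne'] at hlog
  linarith


-- rate-level lemmas

lemma covSum_posSemidef {K Nt Nr d : ℕ} (H : Matrix (Fin Nr) (Fin Nt) ℂ)
    (V : Fin K → Matrix (Fin Nt) (Fin d) ℂ) (S : Finset (Fin K)) :
    (covSum H V S).PosSemidef := by
  apply posSemidef_sum
  intro m _
  have h : H * V m * (V m)ᴴ * Hᴴ = (H * V m) * (H * V m)ᴴ := by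
    rw [Matrix.conjTranspose_mul, Matrix.mul_assoc]
  rw [h]
  exact Matrix.posSemidef_self_mul_conjTranspose _

lemma covSum_univ {K Nt Nr d : ℕ} (H : Matrix (Fin Nr) (Fin Nt) ℂ)
    (V : Fin K → Matrix (Fin Nt) (Fin d) ℂ) (k : Fin K) :
    covSum H V Finset.univ
      = covSum H V (Finset.univ.erase k) + H * V k * (V k)ᴴ * Hᴴ := by
  rw [covSum, covSum, ← Finset.sum_erase_add _ _ (Finset.mem_univ k)]

lemma tp_eq {K Nt d : ℕ} (V : Fin K → Matrix (Fin Nt) (Fin d) ℂ) :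
    totalPower V = ∑ k : Fin K, ∑ i : Fin Nt, ∑ j : Fin d, Complex.normSq (V k i j) := by
  unfold totalPower
  refine Finset.sum_congr rfl fun k _ => ?_
  simp only [Matrix.trace, Matrix.diag, Matrix.mul_apply, Matrix.conjTranspose_apply,
    Complex.star_def, Complex.mul_conj]
  rw [Complex.re_sum]
  refine Finset.sum_congr rfl fun i _ => ?_
  rw [Complex.re_sum]
  simp

lemma tp_nonneg {K Nt d : ℕ} (V : Fin K → Matrix (Fin Nt) (Fin d) ℂ) :
    0 ≤ totalPower V :=
  tp_eq V ▸ Finset.sum_nonneg fun _ _ => Finset.sum_nonneg fun _ _ =>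
    Finset.sum_nonneg fun _ _ => Complex.normSq_nonneg _

lemma tp_smul {K Nt d : ℕ} (c : ℝ) (V : Fin K → Matrix (Fin Nt) (Fin d) ℂ) :
    totalPower (fun k => (c : ℂ) • V k) = c ^ 2 * totalPower V := by
  rw [tp_eq, tp_eq, Finset.mul_sum]
  refine Finset.sum_congr rfl fun k _ => ?_
  rw [Finset.mul_sum]
  refine Finset.sum_congr rfl fun i _ => ?_
  rw [Finset.mul_sum]
  refine Finset.sum_congr rfl fun j _ => ?_
  simp only [Matrix.smul_apply, smul_eq_mul, Complex.normSq_mul, Complex.normSq_ofReal]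
  ring

lemma tp_eq_zero {K Nt d : ℕ} {V : Fin K → Matrix (Fin Nt) (Fin d) ℂ}
    (h : totalPower V = 0) : ∀ k, V k = 0 := by
  rw [tp_eq] at h
  intro k
  ext i j
  have h1 := (Finset.sum_eq_zero_iff_of_nonneg (fun x _ => Finset.sum_nonneg fun _ _ =>
    Finset.sum_nonneg fun _ _ => Complex.normSq_nonneg _)).mp h k (Finset.mem_univ k)
  have h2 := (Finset.sum_eq_zero_iff_of_nonneg (fun x _ => Finset.sum_nonneg fun _ _ =>
    Complex.normSq_nonneg _)).mp h1 i (Finset.mem_univ i)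
  have h3 := (Finset.sum_eq_zero_iff_of_nonneg (fun x _ =>
    Complex.normSq_nonneg _)).mp h2 j (Finset.mem_univ j)
  simpa using Complex.normSq_eq_zero.mp h3

lemma covSum_smul {K Nt Nr d : ℕ} (H : Matrix (Fin Nr) (Fin Nt) ℂ)
    (V : Fin K → Matrix (Fin Nt) (Fin d) ℂ) (c : ℝ) (S : Finset (Fin K)) :
    covSum H (fun m => (c : ℂ) • V m) S = ((c ^ 2 : ℝ) : ℂ) • covSum H V S := by
  rw [covSum, covSum, Finset.smul_sum]
  refine Finset.sum_congr rfl fun m _ => ?_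
  have hstar : star ((c : ℂ)) = (c : ℂ) := by simp [Complex.star_def, Complex.conj_ofReal]
  rw [Matrix.conjTranspose_smul, hstar]
  simp only [Matrix.mul_smul, Matrix.smul_mul, smul_smul]
  congr 1
  push_cast
  ring

lemma scale_matrix {Nr : ℕ} (τ c : ℝ) (C : Matrix (Fin Nr) (Fin Nr) ℂ) :
    ((↑(c ^ 2 * τ) : ℂ)) • (1 : Matrix (Fin Nr) (Fin Nr) ℂ) + ((c ^ 2 : ℝ) : ℂ) • C
      = ((c ^ 2 : ℝ) : ℂ) • (((τ : ℝ) : ℂ) • 1 + C) := by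
  rw [smul_add, smul_smul]
  congr 2
  push_cast
  ring

lemma det_smul_re {Nr : ℕ} (a : ℝ) (M : Matrix (Fin Nr) (Fin Nr) ℂ) :
    (((a : ℝ) : ℂ) • M).det.re = a ^ Nr * M.det.re := by
  rw [Matrix.det_smul]
  simp [Complex.mul_re, ← Complex.ofReal_pow, Fintype.card_fin]

lemma sumRateGen_scale {K Nt Nr d : ℕ} (H : Fin K → Matrix (Fin Nr) (Fin Nt) ℂ)
    (ω : Fin K → ℝ) (τ : Fin K → ℝ) (hτ : ∀ k, 0 < τ k) (c : ℝ) (hc : 0 < c)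
    (V : Fin K → Matrix (Fin Nt) (Fin d) ℂ) :
    sumRateGen H ω (fun k => c ^ 2 * τ k) (fun m => (c : ℂ) • V m) = sumRateGen H ω τ V := by
  unfold sumRateGen
  refine Finset.sum_congr rfl fun k _ => ?_
  have key : ∀ S : Finset (Fin K),
      Real.log (((↑(c ^ 2 * τ k) : ℂ)) • 1
          + covSum (H k) (fun m => (c : ℂ) • V m) S).det.re
        = (Nr : ℝ) * Real.log (c ^ 2)
          + Real.log ((((τ k : ℝ) : ℂ)) • 1 + covSum (H k) V S).det.re := by
    intro S
    rw [covSum_smul, scale_matrix, det_smul_re,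
      Real.log_mul (by positivity) (dpos (hτ k) (covSum_posSemidef (H k) V S)).ne',
      Real.log_pow]
  rw [key, key]
  ring

lemma rate_term_nonneg {K Nt Nr d : ℕ} (H : Fin K → Matrix (Fin Nr) (Fin Nt) ℂ)
    (V : Fin K → Matrix (Fin Nt) (Fin d) ℂ) {τ : ℝ} (hτ : 0 < τ) (k : Fin K) :
    Real.log (((τ : ℂ)) • 1 + covSum (H k) V (Finset.univ.erase k)).det.re
      ≤ Real.log (((τ : ℂ)) • 1 + covSum (H k) V Finset.univ).det.re := by
  have hB : (H k * V k * (V k)ᴴ * (H k)ᴴ).PosSemidef := by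
    have h : H k * V k * (V k)ᴴ * (H k)ᴴ = (H k * V k) * (H k * V k)ᴴ := by
      rw [Matrix.conjTranspose_mul, Matrix.mul_assoc]
    rw [h]
    exact Matrix.posSemidef_self_mul_conjTranspose _
  have hA := covSum_posSemidef (H k) V (Finset.univ.erase k)
  have := det_re_mono hτ hA hB
  rw [← covSum_univ] at this
  exact Real.log_le_log (dpos hτ hA) this

end SumRateAux

open SumRateAux

/-- Lemma 1: if `V**` globally maximizes the unconstrained power-normalized
sum-rate `R̃` among precoders of positive power, then `α V**` with
`α = √(P_T / P(V**))` satisfies the power constraint with equality and globally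
maximizes the sum-rate `R` subject to `P(V) ≤ P_T`. -/
theorem scaled_unconstrained_maximizer_solves_constrained
    (K Nt Nr d : ℕ) (hK : 1 ≤ K) (hNt : 1 ≤ Nt) (hNr : 1 ≤ Nr) (hd : 1 ≤ d)
    (H : Fin K → Matrix (Fin Nr) (Fin Nt) ℂ) (ω σ : Fin K → ℝ) (PT : ℝ)
    (hω : ∀ k, 0 < ω k) (hσ : ∀ k, 0 < σ k) (hPT : 0 < PT)
    (Vss : Fin K → Matrix (Fin Nt) (Fin d) ℂ)
    (hVss : 0 < totalPower Vss)
    (hmax : ∀ V : Fin K → Matrix (Fin Nt) (Fin d) ℂ,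
      0 < totalPower V → sumRateNorm H ω σ PT V ≤ sumRateNorm H ω σ PT Vss) :
    totalPower (fun k => (Real.sqrt (PT / totalPower Vss) : ℂ) • Vss k) = PT ∧
    ∀ V : Fin K → Matrix (Fin Nt) (Fin d) ℂ, totalPower V ≤ PT →
      sumRate H ω σ V ≤
        sumRate H ω σ (fun k => (Real.sqrt (PT / totalPower Vss) : ℂ) • Vss k) := by
  classical
  set α : ℝ := Real.sqrt (PT / totalPower Vss) with hαdef
  have hαpos : 0 < α := Real.sqrt_pos.mpr (div_pos hPT hVss)
  have hα2 : α ^ 2 = PT / totalPower Vss := Real.sq_sqrt (div_pos hPT hVss).le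
  have htp : totalPower (fun k => (α : ℂ) • Vss k) = PT := by
    rw [tp_smul, hα2, div_mul_cancel₀ _ hVss.ne']
  refine ⟨htp, ?_⟩
  intro V hV
  -- the scaled precoder achieves `R(αV**) = R̃(V**)`
  have hτVss : ∀ k, 0 < σ k ^ 2 * totalPower Vss / PT := fun k => by
    have := hσ k; positivity
  have harith : (fun k => α ^ 2 * (σ k ^ 2 * totalPower Vss / PT)) = fun k => σ k ^ 2 := by
    funext k
    rw [hα2]
    field_simp
  have hRalpha : sumRate H ω σ (fun k => (α : ℂ) • Vss k) = sumRateNorm H ω σ PT Vss := by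
    unfold sumRate sumRateNorm
    rw [← harith]
    exact sumRateGen_scale H ω _ hτVss α hαpos Vss
  rcases eq_or_lt_of_le (tp_nonneg V) with h0 | hPpos
  · -- zero precoder : `R(V) = 0 ≤ R(αV**)`
    have hV0 : ∀ k, V k = 0 := tp_eq_zero h0.symm
    have hRV : sumRate H ω σ V = 0 := by
      unfold sumRate sumRateGen
      refine Finset.sum_eq_zero fun k _ => ?_
      have hcov : ∀ S : Finset (Fin K), covSum (H k) V S = 0 := fun S => by
        simp [covSum, hV0]
      rw [hcov, hcov, sub_self, mul_zero]
    rw [hRV]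
    unfold sumRate sumRateGen
    refine Finset.sum_nonneg fun k _ => mul_nonneg (hω k).le (sub_nonneg.mpr ?_)
    exact rate_term_nonneg H _ (pow_pos (hσ k) 2) k
  · -- positive power : `R(V) ≤ R̃(V) ≤ R̃(V**) = R(αV**)`
    have h1 : sumRate H ω σ V ≤ sumRateNorm H ω σ PT V := by
      unfold sumRate sumRateNorm sumRateGen
      refine Finset.sum_le_sum fun k _ => ?_
      refine mul_le_mul_of_nonneg_left ?_ (hω k).le
      have hs : 0 < σ k ^ 2 * totalPower V / PT := by
        have := hσ k; positivity
      have hst : σ k ^ 2 * totalPower V / PT ≤ σ k ^ 2 := by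
        rw [div_le_iff₀ hPT]
        have := sq_nonneg (σ k)
        nlinarith
      have hB : (H k * V k * (V k)ᴴ * (H k)ᴴ).PosSemidef := by
        have h : H k * V k * (V k)ᴴ * (H k)ᴴ = (H k * V k) * (H k * V k)ᴴ := by
          rw [Matrix.conjTranspose_mul, Matrix.mul_assoc]
        rw [h]
        exact Matrix.posSemidef_self_mul_conjTranspose _
      have hA := covSum_posSemidef (H k) V (Finset.univ.erase k)
      have hlog := log_pair_ineq hA hB hs hst
      rw [← covSum_univ] at hlog
      exact hlog
    have h2 := hmax V hPpos
    linarith [h1, h2, hRalpha.ge]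
end

section
/- (Comparison of rates under the power constraint, used in the proof of Lemma 1.) For every precoder V with 0 < P(V) ≤ P_T one has R(V) ≤ R̃(V); moreover, if P(V) = P_T then R(V) = R̃(V). -/
open Matrix Finset
open scoped Matrix

open scoped ComplexOrder

open scoped MatrixOrder in
/-- Square root of a positive semidefinite matrix (via the continuous functional calculus). -/
noncomputable def Matrix.PosSemidef.sqrt {n : ℕ} {M : Matrix (Fin n) (Fin n) ℂ}
    (_ : M.PosSemidef) : Matrix (Fin n) (Fin n) ℂ :=
  CFC.sqrt M

open scoped MatrixOrder in
lemma Matrix.PosSemidef.sqrt_mul_self {n : ℕ} {M : Matrix (Fin n) (Fin n) ℂ}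
    (hM : M.PosSemidef) : hM.sqrt * hM.sqrt = M :=
  CFC.sqrt_mul_sqrt_self M hM.nonneg

open scoped MatrixOrder in
lemma Matrix.PosSemidef.posSemidef_sqrt {n : ℕ} {M : Matrix (Fin n) (Fin n) ℂ}
    (hM : M.PosSemidef) : hM.sqrt.PosSemidef :=
  (CFC.sqrt_nonneg M).posSemidef

namespace SumRateProofAux

variable {n : ℕ}

private lemma det_re_pos {M : Matrix (Fin n) (Fin n) ℂ} (hM : M.PosDef) : 0 < M.det.re := by
  have h := hM.det_pos
  rw [Complex.lt_def] at h
  simpa using h.1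

private lemma det_eq_ofReal {M : Matrix (Fin n) (Fin n) ℂ} (hM : M.PosDef) :
    M.det = (M.det.re : ℂ) := by
  have h := hM.det_pos
  rw [Complex.lt_def] at h
  have h2 : M.det.im = 0 := by simpa using h.2.symm
  exact Complex.ext (by simp) (by simp [h2])

private lemma psd_smul_real {M : Matrix (Fin n) (Fin n) ℂ} (hM : M.PosSemidef) {c : ℝ}
    (hc : 0 ≤ c) : ((c : ℂ) • M).PosSemidef := by
  refine Matrix.PosSemidef.of_dotProduct_mulVec_nonneg ?_ ?_
  · rw [Matrix.IsHermitian, conjTranspose_smul, hM.1]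
    congr 1
    simp [Complex.star_def, Complex.conj_ofReal]
  · intro x
    rw [smul_mulVec, dotProduct_smul, smul_eq_mul]
    exact mul_nonneg (by exact_mod_cast hc) (hM.dotProduct_mulVec_nonneg x)

private lemma posDef_smul_one {c : ℝ} (hc : 0 < c) :
    ((c : ℂ) • (1 : Matrix (Fin n) (Fin n) ℂ)).PosDef := by
  rw [smul_one_eq_diagonal]
  refine Matrix.PosDef.diagonal (fun i => ?_)
  exact_mod_cast hc

private lemma det_add_psd (P Q : Matrix (Fin n) (Fin n) ℂ) (hP : P.PosDef) (hQ : Q.PosSemidef) :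
    (P + Q).det = P.det * (1 + hQ.sqrt * P⁻¹ * hQ.sqrt).det := by
  have hdet : IsUnit P.det := hP.det_pos.ne'.isUnit
  have h1 : (1 + hQ.sqrt * P⁻¹ * hQ.sqrt).det = (1 + Q * P⁻¹).det := by
    rw [Matrix.det_one_add_mul_comm, ← Matrix.mul_assoc, hQ.sqrt_mul_self]
  have h2 : 1 + Q * P⁻¹ = (P + Q) * P⁻¹ := by
    rw [add_mul, Matrix.mul_nonsing_inv _ hdet]
  rw [h1, h2, det_mul, det_nonsing_inv, mul_left_comm, Ring.mul_inverse_cancel _ hdet, mul_one]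

private lemma one_le_det_one_add {W : Matrix (Fin n) (Fin n) ℂ} (hW : W.PosSemidef) :
    1 ≤ (1 + W).det.re := by
  have hsp := hW.1.spectral_theorem
  simp only [Unitary.conjStarAlgAut_apply, Unitary.coe_star] at hsp
  set U : Matrix (Fin n) (Fin n) ℂ :=
    (IsHermitian.eigenvectorUnitary hW.1 : Matrix (Fin n) (Fin n) ℂ) with hU
  have hUU : U * star U = 1 :=
    Matrix.mem_unitaryGroup_iff.mp (IsHermitian.eigenvectorUnitary hW.1).2
  have hdec : 1 + W = U * (1 + diagonal (RCLike.ofReal ∘ hW.1.eigenvalues)) * star U := by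
    rw [mul_add, add_mul, mul_one, hUU, ← hsp]
  have hdiag : (1 + diagonal (RCLike.ofReal ∘ hW.1.eigenvalues) : Matrix (Fin n) (Fin n) ℂ)
      = diagonal (fun i => 1 + (hW.1.eigenvalues i : ℂ)) := by
    rw [← diagonal_one, ← diagonal_add]
    rfl
  have hval : (1 + W).det = ((∏ i, (1 + hW.1.eigenvalues i) : ℝ) : ℂ) := by
    rw [hdec, det_mul, det_mul, hdiag, det_diagonal]
    have hdetU : (star U).det * U.det = 1 := by rw [mul_comm, ← det_mul, hUU, det_one]
    rw [mul_comm, ← mul_assoc, hdetU, one_mul]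
    push_cast
    rfl
  rw [hval, Complex.ofReal_re]
  have h := Finset.prod_le_prod (s := Finset.univ) (f := fun _ : Fin n => (1 : ℝ))
    (g := fun i => 1 + hW.1.eigenvalues i) (fun i _ => zero_le_one)
    (fun i _ => le_add_of_nonneg_right (hW.eigenvalues_nonneg i))
  simpa using h

private lemma sandwich_psd {M S : Matrix (Fin n) (Fin n) ℂ} (hM : M.PosSemidef)
    (hS : S.IsHermitian) : (S * M * S).PosSemidef := by
  have := hM.conjTranspose_mul_mul_same S
  rwa [hS.eq] at this

private lemma det_re_le_det_re_add {P Q : Matrix (Fin n) (Fin n) ℂ} (hP : P.PosDef)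
    (hQ : Q.PosSemidef) : P.det.re ≤ (P + Q).det.re := by
  have hPSD : (hQ.sqrt * P⁻¹ * hQ.sqrt).PosSemidef :=
    sandwich_psd hP.inv.posSemidef hQ.posSemidef_sqrt.isHermitian
  have h1 : 1 ≤ (1 + hQ.sqrt * P⁻¹ * hQ.sqrt).det.re := one_le_det_one_add hPSD
  have h := det_add_psd P Q hP hQ
  have hp := det_re_pos hP
  rw [h, det_eq_ofReal hP]
  simp only [Complex.mul_re, Complex.ofReal_re, Complex.ofReal_im, zero_mul, sub_zero]
  nlinarith

private lemma posDef_mul_self_add_smul {A : Matrix (Fin n) (Fin n) ℂ} (hA : A.PosDef)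
    {c : ℝ} (hc : 0 ≤ c) : (A * A + (c : ℂ) • A).PosDef := by
  refine Matrix.PosDef.of_dotProduct_mulVec_pos ?_ ?_
  · have h1 : (A * A).IsHermitian := by
      rw [Matrix.IsHermitian, conjTranspose_mul, hA.isHermitian.eq]
    exact h1.add ((psd_smul_real hA.posSemidef hc).1)
  · intro x hx
    have hy : A *ᵥ x ≠ 0 := by
      intro h
      have hinj : Function.Injective (A.mulVec) :=
        Matrix.mulVec_injective_iff_isUnit.mpr hA.isUnit
      exact hx (hinj (by simpa using h))
    have h1 : dotProduct (star x) ((A * A) *ᵥ x) = dotProduct (star (A *ᵥ x)) (A *ᵥ x) := by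
      rw [star_mulVec, hA.isHermitian.eq, ← mulVec_mulVec, dotProduct_mulVec]
    have h2 : 0 < dotProduct (star x) ((A * A) *ᵥ x) := by
      rw [h1]
      exact Matrix.dotProduct_star_self_pos_iff.mpr hy
    have h3 : 0 ≤ dotProduct (star x) (((c : ℂ) • A) *ᵥ x) :=
      (psd_smul_real hA.posSemidef hc).dotProduct_mulVec_nonneg x
    calc (0 : ℂ) < dotProduct (star x) ((A * A) *ᵥ x) := h2
      _ ≤ _ := by
          rw [add_mulVec, dotProduct_add]
          exact le_add_of_nonneg_right h3

private lemma key {C D : Matrix (Fin n) (Fin n) ℂ} (hC : C.PosSemidef) (hD : D.PosSemidef)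
    {τ' τ : ℝ} (hτ' : 0 < τ') (hle : τ' ≤ τ) :
    Real.log ((τ : ℂ) • (1 : Matrix (Fin n) (Fin n) ℂ) + (C + D)).det.re
      - Real.log ((τ : ℂ) • (1 : Matrix (Fin n) (Fin n) ℂ) + C).det.re
    ≤ Real.log ((τ' : ℂ) • (1 : Matrix (Fin n) (Fin n) ℂ) + (C + D)).det.re
      - Real.log ((τ' : ℂ) • (1 : Matrix (Fin n) (Fin n) ℂ) + C).det.re := by
  have hτ : 0 < τ := lt_of_lt_of_le hτ' hle
  set A := (τ' : ℂ) • (1 : Matrix (Fin n) (Fin n) ℂ) + C with hAdef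
  set B := (τ : ℂ) • (1 : Matrix (Fin n) (Fin n) ℂ) + C with hBdef
  have hA : A.PosDef := (posDef_smul_one hτ').add_posSemidef hC
  have hB : B.PosDef := (posDef_smul_one hτ).add_posSemidef hC
  have hBD : (τ : ℂ) • (1 : Matrix (Fin n) (Fin n) ℂ) + (C + D) = B + D := by
    rw [hBdef, add_assoc]
  have hAD : (τ' : ℂ) • (1 : Matrix (Fin n) (Fin n) ℂ) + (C + D) = A + D := by
    rw [hAdef, add_assoc]
  set S := hD.sqrt with hSdef
  set c : ℝ := τ - τ' with hcdef
  have hc : 0 ≤ c := by simp [hcdef]; linarith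
  have hBA : B = A + (c : ℂ) • 1 := by
    rw [hAdef, hBdef, hcdef]
    push_cast
    rw [sub_smul]
    abel
  have hBApd : (B * A).PosDef := by
    have : B * A = A * A + (c : ℂ) • A := by
      rw [hBA, add_mul, smul_mul_assoc, one_mul]
    rw [this]
    exact posDef_mul_self_add_smul hA hc
  have hinv : A⁻¹ = B⁻¹ + (c : ℂ) • (B * A)⁻¹ := by
    have hAu : IsUnit A.det := hA.det_pos.ne'.isUnit
    have hBu : IsUnit B.det := hB.det_pos.ne'.isUnit
    have h1 : A⁻¹ * (B - A) * B⁻¹ = A⁻¹ - B⁻¹ := by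
      rw [mul_sub, sub_mul, Matrix.mul_assoc, Matrix.mul_nonsing_inv _ hBu, Matrix.mul_one,
        Matrix.nonsing_inv_mul _ hAu, Matrix.one_mul]
    have h2 : A⁻¹ * (B - A) * B⁻¹ = (c : ℂ) • (A⁻¹ * B⁻¹) := by
      rw [hBA]
      rw [add_sub_cancel_left]
      rw [Matrix.mul_smul, Matrix.mul_one, Matrix.smul_mul]
    have h3 : (B * A)⁻¹ = A⁻¹ * B⁻¹ := Matrix.mul_inv_rev B A
    rw [h3]
    have h12 : A⁻¹ - B⁻¹ = (c : ℂ) • (A⁻¹ * B⁻¹) := h1.symm.trans h2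
    exact (sub_eq_iff_eq_add.mp h12).trans (add_comm _ _)
  set X := S * B⁻¹ * S with hXdef
  set Y := S * A⁻¹ * S with hYdef
  have hXpsd : X.PosSemidef := sandwich_psd hB.inv.posSemidef hD.posSemidef_sqrt.isHermitian
  have hZpsd : ((c : ℂ) • (S * (B * A)⁻¹ * S)).PosSemidef :=
    psd_smul_real (sandwich_psd hBApd.inv.posSemidef hD.posSemidef_sqrt.isHermitian) hc
  have hYX : Y = X + (c : ℂ) • (S * (B * A)⁻¹ * S) := by
    rw [hYdef, hXdef, hinv]
    rw [Matrix.mul_add, Matrix.add_mul, Matrix.mul_smul, Matrix.smul_mul]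
  have hfB : (B + D).det = B.det * (1 + X).det := det_add_psd B D hB hD
  have hfA : (A + D).det = A.det * (1 + Y).det := det_add_psd A D hA hD
  have h1X : (1 + X).PosDef := Matrix.PosDef.one.add_posSemidef hXpsd
  have h1Y : (1 + Y).PosDef := by
    rw [hYX, ← add_assoc]
    exact h1X.add_posSemidef hZpsd
  have hxy : (1 + X).det.re ≤ (1 + Y).det.re := by
    have := det_re_le_det_re_add h1X hZpsd
    rwa [add_assoc, ← hYX] at this
  have hBDre : (B + D).det.re = B.det.re * (1 + X).det.re := by
    rw [hfB, det_eq_ofReal hB, det_eq_ofReal h1X]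
    simp
  have hADre : (A + D).det.re = A.det.re * (1 + Y).det.re := by
    rw [hfA, det_eq_ofReal hA, det_eq_ofReal h1Y]
    simp
  rw [hBD, hAD, hBDre, hADre,
    Real.log_mul (det_re_pos hB).ne' (det_re_pos h1X).ne',
    Real.log_mul (det_re_pos hA).ne' (det_re_pos h1Y).ne']
  have hlog : Real.log (1 + X).det.re ≤ Real.log (1 + Y).det.re :=
    Real.log_le_log (det_re_pos h1X) hxy
  linarith

lemma term_psd {Nt Nr d : ℕ} (H : Matrix (Fin Nr) (Fin Nt) ℂ)
    (W : Matrix (Fin Nt) (Fin d) ℂ) : (H * W * Wᴴ * Hᴴ).PosSemidef := by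
  have := Matrix.posSemidef_self_mul_conjTranspose (H * W)
  simpa [Matrix.conjTranspose_mul, Matrix.mul_assoc] using this

lemma covSum_psd {K Nt Nr d : ℕ} (H : Matrix (Fin Nr) (Fin Nt) ℂ)
    (V : Fin K → Matrix (Fin Nt) (Fin d) ℂ) (S : Finset (Fin K)) :
    (covSum H V S).PosSemidef := by
  unfold covSum
  refine Finset.sum_induction _ _ (fun a b ha hb => ha.add hb) Matrix.PosSemidef.zero ?_
  exact fun m _ => term_psd H (V m)

lemma covSum_decomp {K Nt Nr d : ℕ} (H : Matrix (Fin Nr) (Fin Nt) ℂ)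
    (V : Fin K → Matrix (Fin Nt) (Fin d) ℂ) (k : Fin K) :
    covSum H V Finset.univ = covSum H V (Finset.univ.erase k) + H * V k * (V k)ᴴ * Hᴴ :=
  (Finset.sum_erase_add _ _ (Finset.mem_univ k)).symm

end SumRateProofAux

/-- Comparison of rates under the power constraint: for every precoder `V` with
`0 < P(V) ≤ P_T` one has `R(V) ≤ R̃(V)`, with equality when `P(V) = P_T`. -/
theorem sumRate_le_sumRateNorm_of_power_le
    (K Nt Nr d : ℕ) (hK : 1 ≤ K) (hNt : 1 ≤ Nt) (hNr : 1 ≤ Nr) (hd : 1 ≤ d)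
    (H : Fin K → Matrix (Fin Nr) (Fin Nt) ℂ) (ω σ : Fin K → ℝ) (PT : ℝ)
    (hω : ∀ k, 0 < ω k) (hσ : ∀ k, 0 < σ k) (hPT : 0 < PT)
    (V : Fin K → Matrix (Fin Nt) (Fin d) ℂ)
    (hVpos : 0 < totalPower V) (hVle : totalPower V ≤ PT) :
    sumRate H ω σ V ≤ sumRateNorm H ω σ PT V ∧
    (totalPower V = PT → sumRate H ω σ V = sumRateNorm H ω σ PT V) := by
  constructor
  · simp only [sumRate, sumRateNorm, sumRateGen]
    refine Finset.sum_le_sum (fun k _ => ?_)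
    have hτ' : 0 < σ k ^ 2 * totalPower V / PT :=
      div_pos (mul_pos (pow_pos (hσ k) 2) hVpos) hPT
    have hτle : σ k ^ 2 * totalPower V / PT ≤ σ k ^ 2 := by
      rw [div_le_iff₀ hPT]
      exact mul_le_mul_of_nonneg_left hVle (sq_nonneg _)
    have hkey := SumRateProofAux.key (SumRateProofAux.covSum_psd (H k) V (Finset.univ.erase k))
      (SumRateProofAux.term_psd (H k) (V k)) hτ' hτle
    rw [SumRateProofAux.covSum_decomp (H k) V k]
    exact mul_le_mul_of_nonneg_left hkey (hω k).le
  · intro hPfull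
    have hfun : (fun k : Fin K => σ k ^ 2 * totalPower V / PT) = fun k => σ k ^ 2 := by
      funext k
      rw [hPfull, mul_div_assoc, div_self hPT.ne', mul_one]
    simp only [sumRate, sumRateNorm, hfun]
end

section
/- (Optimality of the W-update in the iterative WMMSE algorithm.) Let E, W ∈ ℂ^{n×n} be Hermitian positive definite matrices, so that Re Tr(WE) is a positive real and det W, det E are positive reals. Then Re Tr(W·E) − log det W ≥ n + log det E, with equality if and only if W = E⁻¹. Consequently, W = E⁻¹ is the unique minimizer of W ↦ Re Tr(W·E) − log det W over Hermitian positive definite matrices W. -/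
open Matrix
open scoped Matrix ComplexOrder
open scoped MatrixOrder

/-- Core scalar fact for a single Hermitian positive definite matrix `M`:
`Re Tr(M) − log Re det M ≥ n`, with equality iff `M = 1`. -/
lemma wmmse_aux {n : ℕ} {M : Matrix (Fin n) (Fin n) ℂ} (hM : M.PosDef) :
    (n : ℝ) ≤ (Matrix.trace M).re - Real.log M.det.re ∧
    ((Matrix.trace M).re - Real.log M.det.re = (n : ℝ) ↔ M = 1) := by
  classical
  set μ : Fin n → ℝ := hM.1.eigenvalues with hμ
  have hpos : ∀ i, 0 < μ i := fun i => hM.eigenvalues_pos i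
  set U : Matrix (Fin n) (Fin n) ℂ := (hM.1.eigenvectorUnitary : Matrix (Fin n) (Fin n) ℂ)
    with hU
  have hUU : star U * U = 1 := Matrix.mem_unitaryGroup_iff'.mp hM.1.eigenvectorUnitary.2
  have hspec : M = U * Matrix.diagonal (RCLike.ofReal ∘ μ) * star U := hM.1.spectral_theorem
  -- trace
  have htr : (Matrix.trace M).re = ∑ i, μ i := by
    have : Matrix.trace M = Matrix.trace (Matrix.diagonal (RCLike.ofReal ∘ μ)) := by
      conv_lhs => rw [hspec]
      rw [Matrix.trace_mul_cycle, hUU, one_mul]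
    rw [this, Matrix.trace_diagonal]
    simp [Complex.ext_iff]
  -- determinant
  have hdet : M.det.re = ∏ i, μ i := by
    have : M.det = ((∏ i, μ i : ℝ) : ℂ) := by
      rw [hM.1.det_eq_prod_eigenvalues]
      push_cast
      rfl
    rw [this, Complex.ofReal_re]
  have hlog : Real.log M.det.re = ∑ i, Real.log (μ i) := by
    rw [hdet, Real.log_prod (fun i _ => (hpos i).ne')]
  have key : (Matrix.trace M).re - Real.log M.det.re = ∑ i, (μ i - Real.log (μ i)) := by
    rw [htr, hlog, Finset.sum_sub_distrib]
  have hterm : ∀ i ∈ Finset.univ, (1 : ℝ) ≤ μ i - Real.log (μ i) := by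
    intro i _
    have := Real.log_le_sub_one_of_pos (hpos i)
    linarith
  have hsum : (n : ℝ) ≤ ∑ i, (μ i - Real.log (μ i)) := by
    calc (n : ℝ) = ∑ _i : Fin n, (1 : ℝ) := by simp
    _ ≤ _ := Finset.sum_le_sum hterm
  refine ⟨by rw [key]; exact hsum, ?_, ?_⟩
  · -- equality → M = 1
    intro h
    rw [key] at h
    have heq : ∀ i ∈ Finset.univ, μ i - Real.log (μ i) = (1 : ℝ) := by
      have := (Finset.sum_eq_sum_iff_of_le hterm).mp ?_
      · intro i hi; exact (this i hi).symm
      · rw [h]; simp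
    have hone : ∀ i, μ i = 1 := by
      intro i
      by_contra hne
      have := Real.log_lt_sub_one_of_pos (hpos i) hne
      have h1 := heq i (Finset.mem_univ i)
      linarith
    have hdiag : Matrix.diagonal (RCLike.ofReal ∘ μ) = (1 : Matrix (Fin n) (Fin n) ℂ) := by
      have hfun : (RCLike.ofReal ∘ μ : Fin n → ℂ) = fun _ => 1 := by
        funext i; simp [hone i]
      rw [hfun, ← Matrix.diagonal_one]
    rw [hspec, hdiag, mul_one]
    exact Matrix.mem_unitaryGroup_iff.mp hM.1.eigenvectorUnitary.2
  · -- M = 1 → equality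
    intro h
    subst h
    simp

/-- Optimality of the `W`-update of the iterative WMMSE algorithm: for Hermitian
positive definite `W, E`,
`Re Tr(W·E) − log det W ≥ n + log det E`, with equality iff `W = E⁻¹`.
Hence `W = E⁻¹` is the unique minimizer of `W ↦ Re Tr(W·E) − log det W`. -/
theorem wmmse_W_update_optimal (n : ℕ)
    (E W : Matrix (Fin n) (Fin n) ℂ) (hE : E.PosDef) (hW : W.PosDef) :
    (n : ℝ) + Real.log E.det.re
        ≤ (Matrix.trace (W * E)).re - Real.log W.det.re ∧
    ((Matrix.trace (W * E)).re - Real.log W.det.re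
        = (n : ℝ) + Real.log E.det.re ↔ W = E⁻¹) := by
  classical
  set S : Matrix (Fin n) (Fin n) ℂ := CFC.sqrt W with hSdef
  have hS : S.PosSemidef := (CFC.sqrt_nonneg W).posSemidef
  have hSH : S.IsHermitian := hS.1
  have hSS : S * S = W := CFC.sqrt_mul_sqrt_self W hW.posSemidef.nonneg
  have hWpos : (0 : ℂ) < W.det := hW.det_pos
  have hEpos : (0 : ℂ) < E.det := hE.det_pos
  have hWre : 0 < W.det.re := by
    rw [Complex.lt_def] at hWpos; simpa using hWpos.1
  have hWim : W.det.im = 0 := by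
    rw [Complex.lt_def] at hWpos; simpa using hWpos.2.symm
  have hEre : 0 < E.det.re := by
    rw [Complex.lt_def] at hEpos; simpa using hEpos.1
  have hEim : E.det.im = 0 := by
    rw [Complex.lt_def] at hEpos; simpa using hEpos.2.symm
  have hWdet : IsUnit W.det := isUnit_iff_ne_zero.mpr hWpos.ne'
  have hEdet : IsUnit E.det := isUnit_iff_ne_zero.mpr hEpos.ne'
  have hSdetne : S.det ≠ 0 := by
    intro h
    have : W.det = 0 := by rw [← hSS, Matrix.det_mul, h, mul_zero]
    exact hWpos.ne' this
  have hSunit : IsUnit S.det := isUnit_iff_ne_zero.mpr hSdetne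
  -- the conjugated matrix
  have hM : (S * E * S).PosDef := by
    rw [Matrix.posDef_iff_dotProduct_mulVec]
    constructor
    · have := Matrix.isHermitian_conjTranspose_mul_mul S hE.1
      rwa [hSH.eq] at this
    · intro x hx
      have hxS : S *ᵥ x ≠ 0 := by
        intro h0
        apply hx
        have : S⁻¹ *ᵥ (S *ᵥ x) = S⁻¹ *ᵥ 0 := by rw [h0]
        rwa [Matrix.mulVec_mulVec, Matrix.nonsing_inv_mul S hSunit,
          Matrix.one_mulVec, Matrix.mulVec_zero] at this
      have h2 : 0 < star x ⬝ᵥ ((Sᴴ * E * S) *ᵥ x) := by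
        simpa only [Matrix.star_mulVec, Matrix.dotProduct_mulVec, Matrix.vecMul_vecMul]
          using hE.dotProduct_mulVec_pos hxS
      rwa [hSH.eq] at h2
  have htr : Matrix.trace (W * E) = Matrix.trace (S * E * S) := by
    rw [← hSS, Matrix.mul_assoc, Matrix.trace_mul_comm]
  have hdet : (S * E * S).det = W.det * E.det := by
    rw [Matrix.det_mul, Matrix.det_mul, ← hSS, Matrix.det_mul]; ring
  have hdetre : (S * E * S).det.re = W.det.re * E.det.re := by
    rw [hdet, Complex.mul_re, hWim, hEim, mul_zero, sub_zero]
  have hlog : Real.log (S * E * S).det.re = Real.log W.det.re + Real.log E.det.re := by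
    rw [hdetre, Real.log_mul hWre.ne' hEre.ne']
  obtain ⟨h1, h2⟩ := wmmse_aux hM
  have hMone : S * E * S = 1 ↔ W = E⁻¹ := by
    constructor
    · intro h
      have hE' : E = S⁻¹ * (S * E * S) * S⁻¹ := by
        rw [show S⁻¹ * (S * E * S) * S⁻¹ = (S⁻¹ * S) * E * (S * S⁻¹) by simp only [Matrix.mul_assoc],
          Matrix.nonsing_inv_mul S hSunit, Matrix.mul_nonsing_inv S hSunit, one_mul, mul_one]
      rw [h, mul_one] at hE'
      have : E = W⁻¹ := by rw [hE', ← Matrix.mul_inv_rev, hSS]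
      rw [this, Matrix.nonsing_inv_nonsing_inv W hWdet]
    · intro h
      have hEeq : E = S⁻¹ * S⁻¹ := by
        have : E = (E⁻¹)⁻¹ := (Matrix.nonsing_inv_nonsing_inv E hEdet).symm
        rw [this, ← h, ← hSS, Matrix.mul_inv_rev]
      rw [hEeq, show S * (S⁻¹ * S⁻¹) * S = (S * S⁻¹) * (S⁻¹ * S) by simp only [Matrix.mul_assoc],
        Matrix.nonsing_inv_mul S hSunit, Matrix.mul_nonsing_inv S hSunit, one_mul]
  constructor
  · rw [htr, hlog] at *
    linarith
  · rw [← hMone, ← h2, htr, hlog]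
    constructor <;> intro h <;> linarith
end

section
/- (Optimality of the U-update in the iterative WMMSE algorithm, via completion of squares.) Let H ∈ ℂ^{N_r×N_t}, let V_1,…,V_K ∈ ℂ^{N_t×d}, fix k ∈ {1,…,K} and a real c > 0. Set A = cI + Σ_{m=1}^K H V_m V_mᴴ Hᴴ ∈ ℂ^{N_r×N_r}, which is Hermitian positive definite and hence invertible, and for U ∈ ℂ^{N_r×d} define E(U) = (I − Uᴴ H V_k)(I − Uᴴ H V_k)ᴴ + Σ_{m≠k} Uᴴ H V_m V_mᴴ Hᴴ U + c UᴴU. Then, with U* = A⁻¹ H V_k, for every U ∈ ℂ^{N_r×d} one has E(U) = E(U*) + (U − U*)ᴴ A (U − U*). Consequently, for every Hermitian positive semidefinite W ∈ ℂ^{d×d}, Re Tr(W·E(U)) ≥ Re Tr(W·E(U*)). -/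
open Matrix Finset
open scoped Matrix ComplexOrder

/-- Optimality of the `U`-update in the iterative WMMSE algorithm, via
completion of squares: with `A = cI + Σₘ H Vₘ Vₘᴴ Hᴴ` (Hermitian positive
definite) and `U* = A⁻¹ H V_k`, the per-user MSE matrix satisfies
`E(U) = E(U*) + (U − U*)ᴴ A (U − U*)` for every `U`; consequently
`Re Tr(W·E(U)) ≥ Re Tr(W·E(U*))` for every Hermitian PSD `W`. -/
theorem wmmse_U_update_optimal (K Nt Nr d : ℕ)
    (H : Matrix (Fin Nr) (Fin Nt) ℂ) (V : Fin K → Matrix (Fin Nt) (Fin d) ℂ)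
    (k : Fin K) (c : ℝ) (hc : 0 < c)
    (A : Matrix (Fin Nr) (Fin Nr) ℂ)
    (hA : A = (c : ℂ) • (1 : Matrix (Fin Nr) (Fin Nr) ℂ)
        + ∑ m : Fin K, H * V m * (V m)ᴴ * Hᴴ)
    (E : Matrix (Fin Nr) (Fin d) ℂ → Matrix (Fin d) (Fin d) ℂ)
    (hE : ∀ U, E U = (1 - Uᴴ * H * V k) * (1 - Uᴴ * H * V k)ᴴ
        + ∑ m ∈ Finset.univ.erase k, Uᴴ * H * V m * (V m)ᴴ * Hᴴ * U
        + (c : ℂ) • (Uᴴ * U))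
    (Ustar : Matrix (Fin Nr) (Fin d) ℂ) (hUstar : Ustar = A⁻¹ * H * V k) :
    A.PosDef ∧
    (∀ U : Matrix (Fin Nr) (Fin d) ℂ,
      E U = E Ustar + (U - Ustar)ᴴ * A * (U - Ustar)) ∧
    (∀ W : Matrix (Fin d) (Fin d) ℂ, W.PosSemidef →
      ∀ U : Matrix (Fin Nr) (Fin d) ℂ,
        (Matrix.trace (W * E Ustar)).re ≤ (Matrix.trace (W * E U)).re) := by
  have hPD : A.PosDef := by
    rw [hA]
    refine Matrix.PosDef.add_posSemidef ?_ ?_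
    · rw [smul_one_eq_diagonal]
      exact Matrix.posDef_diagonal_iff.mpr fun _ => by positivity
    · refine Finset.sum_induction _ _ (fun a b ha hb => ha.add hb) .zero fun m _ => ?_
      have := Matrix.posSemidef_self_mul_conjTranspose (H * V m)
      simpa [Matrix.conjTranspose_mul, Matrix.mul_assoc] using this
  set B := H * V k with hB
  have hAH : Aᴴ = A := hPD.isHermitian
  have hInv : A * A⁻¹ = 1 :=
    Matrix.mul_nonsing_inv A (A.isUnit_iff_isUnit_det.mp hPD.isUnit)
  have hAU : A * Ustar = B := by
    rw [hUstar, ← Matrix.mul_assoc, ← Matrix.mul_assoc, hInv, Matrix.one_mul]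
  have hUA : Ustarᴴ * A = Bᴴ := by
    rw [← hAU, Matrix.conjTranspose_mul, hAH]
  have key : ∀ U : Matrix (Fin Nr) (Fin d) ℂ,
      E U = 1 - Uᴴ * B - Bᴴ * U + Uᴴ * A * U := by
    intro U
    have hsum : Uᴴ * (∑ m : Fin K, H * V m * (V m)ᴴ * Hᴴ) * U
        = (∑ m ∈ Finset.univ.erase k, Uᴴ * H * V m * (V m)ᴴ * Hᴴ * U)
          + Uᴴ * (B * Bᴴ) * U := by
      rw [Matrix.mul_sum, Matrix.sum_mul, ← Finset.sum_erase_add _ _ (Finset.mem_univ k)]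
      simp [Matrix.mul_assoc, hB, Matrix.conjTranspose_mul]
    have hc1 : Uᴴ * ((c : ℂ) • (1 : Matrix (Fin Nr) (Fin Nr) ℂ)) * U
        = (c : ℂ) • (Uᴴ * U) := by
      simp [Matrix.mul_smul, Matrix.smul_mul]
    have hsq : (1 - Uᴴ * H * V k) * (1 - Uᴴ * H * V k)ᴴ
        = 1 - Bᴴ * U - Uᴴ * B + Uᴴ * (B * Bᴴ) * U := by
      have h0 : Uᴴ * H * V k = Uᴴ * B := by rw [hB, Matrix.mul_assoc]
      rw [h0]
      simp only [Matrix.conjTranspose_sub, Matrix.conjTranspose_one,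
        Matrix.conjTranspose_mul, Matrix.conjTranspose_conjTranspose,
        Matrix.sub_mul, Matrix.mul_sub, Matrix.one_mul, Matrix.mul_one,
        Matrix.mul_assoc]
      abel
    rw [hE, hA, Matrix.mul_add, Matrix.add_mul, hc1, hsum, hsq]
    abel
  have main : ∀ U : Matrix (Fin Nr) (Fin d) ℂ,
      E U = E Ustar + (U - Ustar)ᴴ * A * (U - Ustar) := by
    intro U
    have hquad : (U - Ustar)ᴴ * A * (U - Ustar)
        = Uᴴ * A * U - Uᴴ * B - Bᴴ * U + Bᴴ * Ustar := by
      simp only [Matrix.conjTranspose_sub, Matrix.sub_mul, Matrix.mul_sub]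
      rw [hUA, Matrix.mul_assoc Uᴴ A Ustar, hAU]
      abel
    have hBU : Ustarᴴ * B = Bᴴ * Ustar := by
      rw [← hUA, ← hAU, Matrix.mul_assoc]
    have hSS : Ustarᴴ * A * Ustar = Bᴴ * Ustar := by rw [hUA]
    rw [key U, key Ustar, hquad, hSS, hBU]
    abel
  refine ⟨hPD, main, fun W hW U => ?_⟩
  have tr_nonneg : ∀ P : Matrix (Fin d) (Fin d) ℂ, P.PosSemidef → 0 ≤ (Matrix.trace P).re := by
    intro P hP
    have h : ∀ i, 0 ≤ (P i i).re := fun i => by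
      have := hP.re_dotProduct_nonneg (Pi.single i 1)
      simpa [dotProduct, Pi.single_apply, mulVec] using this
    simpa [Matrix.trace, Complex.re_sum, Matrix.diag] using
      Finset.sum_nonneg fun i _ => h i
  have hPSD : ((U - Ustar)ᴴ * A * (U - Ustar)).PosSemidef :=
    hPD.posSemidef.conjTranspose_mul_mul_same _
  obtain ⟨S, hS⟩ : ∃ S : Matrix (Fin d) (Fin d) ℂ, (U - Ustar)ᴴ * A * (U - Ustar) = Sᴴ * S := by
    open scoped MatrixOrder in
    obtain ⟨S, hS⟩ := CStarAlgebra.nonneg_iff_eq_star_mul_self.mp hPSD.nonneg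
    exact ⟨S, hS⟩
  have h2 : (S * W * Sᴴ).PosSemidef := hW.mul_mul_conjTranspose_same _
  have h3 : Matrix.trace (W * ((U - Ustar)ᴴ * A * (U - Ustar)))
      = Matrix.trace (S * W * Sᴴ) := by
    rw [hS, ← Matrix.mul_assoc, Matrix.trace_mul_comm, ← Matrix.mul_assoc]
  have h4 : 0 ≤ (Matrix.trace (W * ((U - Ustar)ᴴ * A * (U - Ustar)))).re := by
    rw [h3]; exact tr_nonneg _ h2
  rw [main U, Matrix.mul_add, Matrix.trace_add, Complex.add_re]
  linarith
end

section
/- (Optimality of the V-update in the iterative WMMSE algorithm, via completion of squares.) For k = 1,…,K let H_k ∈ ℂ^{N_r×N_t}, U_k ∈ ℂ^{N_r×d}, let W_k ∈ ℂ^{d×d} be Hermitian, and let ω_k > 0, σ_k > 0, P_T > 0 be reals. Set B = Σ_{k=1}^K (ω_k σ_k²/P_T) Re Tr(U_k W_k U_kᴴ) · I + Σ_{m=1}^K ω_m H_mᴴ U_m W_m U_mᴴ H_m ∈ ℂ^{N_t×N_t}, and assume B is invertible. For a K-tuple V = (V_1,…,V_K) with V_k ∈ ℂ^{N_t×d} define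 E_{2,k}(V) = (I − U_kᴴH_kV_k)(I − U_kᴴH_kV_k)ᴴ + Σ_{m≠k} U_kᴴH_kV_mV_mᴴH_kᴴU_k + (σ_k²/P_T)(Σ_{n=1}^K Re Tr(V_nV_nᴴ)) U_kᴴU_k, and g(V) = Σ_{k=1}^K ω_k Re Tr(W_k E_{2,k}(V)). Then, with V* = (V_1*,…,V_K*) where V_n* = ω_n B⁻¹ H_nᴴ U_n W_n, for every V one has g(V) = g(V*) + Σ_{n=1}^K Re Tr( (V_n − V_n*)ᴴ B (V_n − V_n*) ). In particular, if B is positive definite then V* is the unique global minimizer of g. -/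
open Matrix Finset
open scoped Matrix ComplexOrder


lemma re_trace_ct {n : Type*} [Fintype n] (M : Matrix n n ℂ) :
    (Matrix.trace Mᴴ).re = (Matrix.trace M).re := by
  rw [Matrix.trace_conjTranspose]
  exact Complex.conj_re _

lemma re_trace_herm_ct {n : Type*} [Fintype n] {W N : Matrix n n ℂ}
    (hW : Wᴴ = W) : (Matrix.trace (W * Nᴴ)).re = (Matrix.trace (W * N)).re := by
  have h : W * Nᴴ = (N * W)ᴴ := by rw [conjTranspose_mul, hW]
  rw [h, re_trace_ct, Matrix.trace_mul_comm]

lemma trace_quad {n m : Type*} [Fintype n] [Fintype m]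
    (Wk : Matrix n n ℂ) (C : Matrix n m ℂ) (X : Matrix m n ℂ) :
    Matrix.trace (Xᴴ * Cᴴ * Wk * C * X) = Matrix.trace (Wk * (C * X * (C * X)ᴴ)) := by
  have h1 : Xᴴ * Cᴴ * Wk * C * X = (C * X)ᴴ * Wk * (C * X) := by
    simp [conjTranspose_mul, Matrix.mul_assoc]
  rw [h1, Matrix.trace_mul_cycle, ← Matrix.trace_mul_comm, ← Matrix.mul_assoc]

section main
variable {K Nt Nr d : ℕ}
  (H : Fin K → Matrix (Fin Nr) (Fin Nt) ℂ)
  (U : Fin K → Matrix (Fin Nr) (Fin d) ℂ)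
  (W : Fin K → Matrix (Fin d) (Fin d) ℂ)

-- diagonal entry of Mᴴ B M as a quadratic form on the column
lemma diag_quad_form (B : Matrix (Fin Nt) (Fin Nt) ℂ) (M : Matrix (Fin Nt) (Fin d) ℂ)
    (j : Fin d) :
    (Mᴴ * B * M) j j = star (fun i => M i j) ⬝ᵥ B *ᵥ (fun i => M i j) := by
  simp only [Matrix.mul_apply, Matrix.conjTranspose_apply,
    Matrix.mulVec, dotProduct, Pi.star_apply, RCLike.star_def]
  simp only [Finset.sum_mul, Finset.mul_sum]
  rw [Finset.sum_comm]
  exact Finset.sum_congr rfl fun x _ => Finset.sum_congr rfl fun y _ => by ring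

lemma trace_quad_nonneg {B : Matrix (Fin Nt) (Fin Nt) ℂ} (hpd : B.PosDef)
    (M : Matrix (Fin Nt) (Fin d) ℂ) :
    0 ≤ (Matrix.trace (Mᴴ * B * M)).re ∧
      ((Matrix.trace (Mᴴ * B * M)).re = 0 → M = 0) := by
  have hdiag : ∀ j, 0 ≤ ((Mᴴ * B * M) j j).re := by
    intro j
    rw [diag_quad_form]
    exact (Complex.le_def.mp (hpd.posSemidef.dotProduct_mulVec_nonneg _)).1
  have htr : (Matrix.trace (Mᴴ * B * M)).re = ∑ j, ((Mᴴ * B * M) j j).re := by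
    rw [Matrix.trace]; exact Complex.re_sum _ _
  constructor
  · rw [htr]; exact Finset.sum_nonneg fun j _ => hdiag j
  · intro h0
    rw [htr] at h0
    have hall := (Finset.sum_eq_zero_iff_of_nonneg (fun j _ => hdiag j)).mp h0
    ext i j
    by_contra hij
    have hcolne : (fun i => M i j) ≠ 0 := by
      intro hcol
      exact hij (by simpa using congrFun hcol i)
    have hpos := hpd.dotProduct_mulVec_pos hcolne
    have h1 : (0:ℝ) < ((Mᴴ * B * M) j j).re := by
      have := (Complex.lt_def.mp hpos).1
      rw [← diag_quad_form] at this
      simpa using this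
    have h2 := hall j (Finset.mem_univ j)
    linarith
end main

/-- Optimality of the `V`-update in the iterative WMMSE algorithm, via
completion of squares: with
`B = Σₖ (ωₖσₖ²/P_T) Re Tr(Uₖ Wₖ Uₖᴴ)·I + Σₘ ωₘ Hₘᴴ Uₘ Wₘ Uₘᴴ Hₘ` invertible and
`Vₙ* = ωₙ B⁻¹ Hₙᴴ Uₙ Wₙ`, the weighted sum-MSE objective
`g(V) = Σₖ ωₖ Re Tr(Wₖ E_{2,k}(V))` satisfies
`g(V) = g(V*) + Σₙ Re Tr((Vₙ − Vₙ*)ᴴ B (Vₙ − Vₙ*))`; in particular, if `B` is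
positive definite then `V*` is the unique global minimizer of `g`. -/
theorem wmmse_V_update_optimal (K Nt Nr d : ℕ)
    (H : Fin K → Matrix (Fin Nr) (Fin Nt) ℂ)
    (U : Fin K → Matrix (Fin Nr) (Fin d) ℂ)
    (W : Fin K → Matrix (Fin d) (Fin d) ℂ) (hW : ∀ k, (W k).IsHermitian)
    (ω σ : Fin K → ℝ) (PT : ℝ)
    (hω : ∀ k, 0 < ω k) (hσ : ∀ k, 0 < σ k) (hPT : 0 < PT)
    (B : Matrix (Fin Nt) (Fin Nt) ℂ)
    (hB : B = ((∑ k : Fin K,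
          ω k * σ k ^ 2 / PT * (Matrix.trace (U k * W k * (U k)ᴴ)).re : ℝ) : ℂ)
            • (1 : Matrix (Fin Nt) (Fin Nt) ℂ)
        + ∑ m : Fin K, ((ω m : ℝ) : ℂ) • ((H m)ᴴ * U m * W m * (U m)ᴴ * H m))
    (hBunit : IsUnit B)
    (E2 : Fin K → (Fin K → Matrix (Fin Nt) (Fin d) ℂ) → Matrix (Fin d) (Fin d) ℂ)
    (hE2 : ∀ k V, E2 k V
        = (1 - (U k)ᴴ * H k * V k) * (1 - (U k)ᴴ * H k * V k)ᴴ
        + ∑ m ∈ Finset.univ.erase k, (U k)ᴴ * H k * V m * (V m)ᴴ * (H k)ᴴ * U k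
        + ((σ k ^ 2 / PT * ∑ n : Fin K, (Matrix.trace (V n * (V n)ᴴ)).re : ℝ) : ℂ)
            • ((U k)ᴴ * U k))
    (g : (Fin K → Matrix (Fin Nt) (Fin d) ℂ) → ℝ)
    (hg : ∀ V, g V = ∑ k : Fin K, ω k * (Matrix.trace (W k * E2 k V)).re)
    (Vstar : Fin K → Matrix (Fin Nt) (Fin d) ℂ)
    (hVstar : ∀ n, Vstar n = ((ω n : ℝ) : ℂ) • (B⁻¹ * (H n)ᴴ * U n * W n)) :
    (∀ V : Fin K → Matrix (Fin Nt) (Fin d) ℂ,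
      g V = g Vstar
        + ∑ n : Fin K, (Matrix.trace ((V n - Vstar n)ᴴ * B * (V n - Vstar n))).re) ∧
    (B.PosDef → ∀ V : Fin K → Matrix (Fin Nt) (Fin d) ℂ,
      g Vstar ≤ g V ∧ (g V = g Vstar → V = Vstar)) := by
    classical
  have hW' : ∀ k, (W k)ᴴ = W k := fun k => (hW k).eq
  have hBdet : IsUnit B.det := (Matrix.isUnit_iff_isUnit_det B).mp hBunit
  have hBinv : B * B⁻¹ = 1 := Matrix.mul_nonsing_inv B hBdet
  have hBV : ∀ n, B * Vstar n = ((ω n : ℝ) : ℂ) • ((H n)ᴴ * U n * W n) := by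
    intro n
    rw [hVstar n, Matrix.mul_smul]
    congr 1
    calc B * (B⁻¹ * (H n)ᴴ * U n * W n)
        = B * B⁻¹ * (H n)ᴴ * U n * W n := by simp only [Matrix.mul_assoc]
      _ = (H n)ᴴ * U n * W n := by rw [hBinv, Matrix.one_mul]
  have hBH : Bᴴ = B := by
    rw [hB]
    simp only [conjTranspose_add, conjTranspose_smul, conjTranspose_one,
      conjTranspose_sum, conjTranspose_mul, conjTranspose_conjTranspose,
      Complex.star_def, Complex.conj_ofReal]
    congr 1
    refine Finset.sum_congr rfl fun m _ => ?_
    rw [hW' m]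
    simp [Matrix.mul_assoc]
  -- cross term
  have hcross : ∀ (n : Fin K) (X : Matrix (Fin Nt) (Fin d) ℂ),
      (Matrix.trace (Xᴴ * B * Vstar n)).re
        = ω n * (Matrix.trace (W n * ((U n)ᴴ * H n) * X)).re := by
    intro n X
    rw [Matrix.mul_assoc, hBV n, Matrix.mul_smul, Matrix.trace_smul]
    rw [smul_eq_mul, Complex.re_ofReal_mul]
    congr 1
    have h : (W n * ((U n)ᴴ * H n) * X)ᴴ = Xᴴ * ((H n)ᴴ * U n * W n) := by
      simp [conjTranspose_mul, hW' n, Matrix.mul_assoc]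
    rw [← h, re_trace_ct]
  have hcross' : ∀ (n : Fin K) (X : Matrix (Fin Nt) (Fin d) ℂ),
      (Matrix.trace ((Vstar n)ᴴ * B * X)).re
        = ω n * (Matrix.trace (W n * ((U n)ᴴ * H n) * X)).re := by
    intro n X
    have h : (Xᴴ * B * Vstar n)ᴴ = (Vstar n)ᴴ * B * X := by
      simp [conjTranspose_mul, hBH, Matrix.mul_assoc]
    rw [← h, re_trace_ct, hcross]
  -- quadratic form expansion
  have hQn : ∀ (X : Matrix (Fin Nt) (Fin d) ℂ),
      (Matrix.trace (Xᴴ * B * X)).re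
        = (∑ k, ω k * σ k ^ 2 / PT * (Matrix.trace (U k * W k * (U k)ᴴ)).re)
            * (Matrix.trace (X * Xᴴ)).re
          + ∑ j, ω j * (Matrix.trace (W j * (((U j)ᴴ * H j) * X
              * (((U j)ᴴ * H j) * X)ᴴ))).re := by
    intro X
    rw [hB]
    rw [Matrix.mul_add, Matrix.add_mul, Matrix.mul_smul, Matrix.mul_one,
      Matrix.smul_mul, Matrix.mul_sum, Matrix.sum_mul]
    rw [Matrix.trace_add, Matrix.trace_smul, Matrix.trace_sum]
    rw [Complex.add_re, smul_eq_mul, Complex.re_ofReal_mul, Complex.re_sum]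
    congr 1
    · rw [Matrix.trace_mul_comm]
    · refine Finset.sum_congr rfl fun j _ => ?_
      rw [Matrix.mul_smul, Matrix.smul_mul, Matrix.trace_smul, smul_eq_mul,
        Complex.re_ofReal_mul]
      congr 2
      have h : Xᴴ * ((H j)ᴴ * U j * W j * (U j)ᴴ * H j) * X
          = Xᴴ * ((U j)ᴴ * H j)ᴴ * W j * ((U j)ᴴ * H j) * X := by
        simp [conjTranspose_mul, Matrix.mul_assoc]
      rw [h, trace_quad]
  -- per-k expansion of the weighted MSE trace
  have hTk : ∀ (k : Fin K) (V : Fin K → Matrix (Fin Nt) (Fin d) ℂ),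
      (Matrix.trace (W k * E2 k V)).re
        = (Matrix.trace (W k)).re
          - 2 * (Matrix.trace (W k * ((U k)ᴴ * H k) * V k)).re
          + ∑ m, (Matrix.trace (W k * (((U k)ᴴ * H k) * V m
              * (((U k)ᴴ * H k) * V m)ᴴ))).re
          + (σ k ^ 2 / PT * ∑ n, (Matrix.trace (V n * (V n)ᴴ)).re)
              * (Matrix.trace (U k * W k * (U k)ᴴ)).re := by
    intro k V
    have hE2' : W k * E2 k V
        = W k - W k * (((U k)ᴴ * H k) * V k)ᴴ - W k * (((U k)ᴴ * H k) * V k)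
          + ∑ m ∈ Finset.univ.erase k,
              W k * (((U k)ᴴ * H k) * V m * (((U k)ᴴ * H k) * V m)ᴴ)
          + W k * (((U k)ᴴ * H k) * V k * (((U k)ᴴ * H k) * V k)ᴴ)
          + ((σ k ^ 2 / PT * ∑ n, (Matrix.trace (V n * (V n)ᴴ)).re : ℝ) : ℂ)
              • (W k * ((U k)ᴴ * U k)) := by
      rw [hE2 k V]
      simp only [conjTranspose_sub, conjTranspose_one, conjTranspose_mul,
        conjTranspose_conjTranspose, Matrix.mul_add, Matrix.mul_sub,
        Matrix.mul_one, Matrix.one_mul, Matrix.sub_mul, Matrix.mul_smul,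
        Matrix.mul_sum, Matrix.mul_assoc]
      abel
    rw [hE2']
    rw [Matrix.trace_add, Matrix.trace_add, Matrix.trace_add, Matrix.trace_sub,
      Matrix.trace_sub, Matrix.trace_sum, Matrix.trace_smul]
    simp only [Complex.add_re, Complex.sub_re, Complex.re_sum, smul_eq_mul,
      Complex.re_ofReal_mul]
    rw [re_trace_herm_ct (hW' k)]
    rw [show W k * (((U k)ᴴ * H k) * V k) = W k * ((U k)ᴴ * H k) * V k from
      (Matrix.mul_assoc _ _ _).symm]
    have hcycU : Matrix.trace (U k * W k * (U k)ᴴ)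
        = Matrix.trace (W k * ((U k)ᴴ * U k)) := by
      rw [Matrix.trace_mul_cycle]
      exact (Matrix.trace_mul_comm _ _).symm
    rw [hcycU]
    have hmerge : (∑ m ∈ Finset.univ.erase k, (Matrix.trace (W k * (((U k)ᴴ * H k)
            * V m * (((U k)ᴴ * H k) * V m)ᴴ))).re)
          + (Matrix.trace (W k * (((U k)ᴴ * H k) * V k
            * (((U k)ᴴ * H k) * V k)ᴴ))).re
        = ∑ m, (Matrix.trace (W k * (((U k)ᴴ * H k) * V m
            * (((U k)ᴴ * H k) * V m)ᴴ))).re :=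
      Finset.sum_erase_add _ _ (Finset.mem_univ k)
    linarith [hmerge]
  -- the key quadratic form of g
  have hkey : ∀ V, g V
      = (∑ k, ω k * (Matrix.trace (W k)).re)
        - 2 * (∑ n, ω n * (Matrix.trace (W n * ((U n)ᴴ * H n) * V n)).re)
        + ∑ n, (Matrix.trace ((V n)ᴴ * B * V n)).re := by
    intro V
    rw [hg]
    have h1 : ∀ k : Fin K, ω k * (Matrix.trace (W k * E2 k V)).re
        = ω k * (Matrix.trace (W k)).re
          - 2 * (ω k * (Matrix.trace (W k * ((U k)ᴴ * H k) * V k)).re)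
          + ∑ m, ω k * (Matrix.trace (W k * (((U k)ᴴ * H k) * V m
              * (((U k)ᴴ * H k) * V m)ᴴ))).re
          + ω k * ((σ k ^ 2 / PT * ∑ n, (Matrix.trace (V n * (V n)ᴴ)).re)
              * (Matrix.trace (U k * W k * (U k)ᴴ)).re) := by
      intro k
      rw [hTk k V, ← Finset.mul_sum]
      ring
    have h2 : ∑ n, (Matrix.trace ((V n)ᴴ * B * V n)).re
        = ∑ n, ((∑ k, ω k * σ k ^ 2 / PT * (Matrix.trace (U k * W k * (U k)ᴴ)).re)
              * (Matrix.trace (V n * (V n)ᴴ)).re)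
          + ∑ n, ∑ j, ω j * (Matrix.trace (W j * (((U j)ᴴ * H j) * V n
              * (((U j)ᴴ * H j) * V n)ᴴ))).re := by
      rw [← Finset.sum_add_distrib]
      exact Finset.sum_congr rfl fun n _ => hQn (V n)
    have h3 : ∑ k, ω k * (Matrix.trace (W k * E2 k V)).re
        = ∑ k, (ω k * (Matrix.trace (W k)).re
          - 2 * (ω k * (Matrix.trace (W k * ((U k)ᴴ * H k) * V k)).re)
          + ∑ m, ω k * (Matrix.trace (W k * (((U k)ᴴ * H k) * V m
              * (((U k)ᴴ * H k) * V m)ᴴ))).re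
          + ω k * ((σ k ^ 2 / PT * ∑ n, (Matrix.trace (V n * (V n)ᴴ)).re)
              * (Matrix.trace (U k * W k * (U k)ᴴ)).re)) :=
      Finset.sum_congr rfl fun k _ => h1 k
    have h4 : ∑ k : Fin K, ∑ m : Fin K, ω k * (Matrix.trace (W k * (((U k)ᴴ * H k) * V m
              * (((U k)ᴴ * H k) * V m)ᴴ))).re
        = ∑ m : Fin K, ∑ k : Fin K, ω k * (Matrix.trace (W k * (((U k)ᴴ * H k) * V m
              * (((U k)ᴴ * H k) * V m)ᴴ))).re := Finset.sum_comm
    have h5 : ∑ k, ω k * ((σ k ^ 2 / PT * ∑ n, (Matrix.trace (V n * (V n)ᴴ)).re)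
              * (Matrix.trace (U k * W k * (U k)ᴴ)).re)
        = ∑ n, ((∑ k, ω k * σ k ^ 2 / PT * (Matrix.trace (U k * W k * (U k)ᴴ)).re)
              * (Matrix.trace (V n * (V n)ᴴ)).re) := by
      rw [← Finset.mul_sum]
      rw [show (∑ k, ω k * σ k ^ 2 / PT * (Matrix.trace (U k * W k * (U k)ᴴ)).re)
            * (∑ n, (Matrix.trace (V n * (V n)ᴴ)).re)
          = ∑ k, (ω k * σ k ^ 2 / PT * (Matrix.trace (U k * W k * (U k)ᴴ)).re
            * ∑ n, (Matrix.trace (V n * (V n)ᴴ)).re) from Finset.sum_mul _ _ _]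
      exact Finset.sum_congr rfl fun k _ => by ring
    rw [h3]
    rw [Finset.sum_add_distrib, Finset.sum_add_distrib, Finset.sum_sub_distrib]
    rw [h4, h5, h2, ← Finset.mul_sum]
    ring
  -- completion of squares
  have hsq : ∀ (n : Fin K) (V : Fin K → Matrix (Fin Nt) (Fin d) ℂ),
      (Matrix.trace ((V n - Vstar n)ᴴ * B * (V n - Vstar n))).re
        = (Matrix.trace ((V n)ᴴ * B * V n)).re
          - 2 * (ω n * (Matrix.trace (W n * ((U n)ᴴ * H n) * V n)).re)
          + ω n * (Matrix.trace (W n * ((U n)ᴴ * H n) * Vstar n)).re := by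
    intro n V
    have expand : (V n - Vstar n)ᴴ * B * (V n - Vstar n)
        = (V n)ᴴ * B * V n - (V n)ᴴ * B * Vstar n - (Vstar n)ᴴ * B * V n
          + (Vstar n)ᴴ * B * Vstar n := by
      simp only [conjTranspose_sub, Matrix.sub_mul, Matrix.mul_sub]; abel
    rw [expand, Matrix.trace_add, Matrix.trace_sub, Matrix.trace_sub,
      Complex.add_re, Complex.sub_re, Complex.sub_re, hcross n (V n),
      hcross' n (V n), hcross n (Vstar n)]
    ring
  have main1 : ∀ V : Fin K → Matrix (Fin Nt) (Fin d) ℂ,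
      g V = g Vstar
        + ∑ n, (Matrix.trace ((V n - Vstar n)ᴴ * B * (V n - Vstar n))).re := by
    intro V
    have hS : ∑ n, (Matrix.trace ((V n - Vstar n)ᴴ * B * (V n - Vstar n))).re
        = ∑ n, (Matrix.trace ((V n)ᴴ * B * V n)).re
          - 2 * ∑ n, ω n * (Matrix.trace (W n * ((U n)ᴴ * H n) * V n)).re
          + ∑ n, ω n * (Matrix.trace (W n * ((U n)ᴴ * H n) * Vstar n)).re := by
      rw [Finset.mul_sum, ← Finset.sum_sub_distrib, ← Finset.sum_add_distrib]
      exact Finset.sum_congr rfl fun n _ => hsq n V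
    have hQs : ∑ n, (Matrix.trace ((Vstar n)ᴴ * B * Vstar n)).re
        = ∑ n, ω n * (Matrix.trace (W n * ((U n)ᴴ * H n) * Vstar n)).re :=
      Finset.sum_congr rfl fun n _ => hcross n (Vstar n)
    rw [hkey V, hkey Vstar]
    linarith [hS, hQs]
  refine ⟨main1, fun hpd V => ?_⟩
  have h1 := main1 V
  have hnn : ∀ n : Fin K, 0 ≤ (Matrix.trace ((V n - Vstar n)ᴴ * B
      * (V n - Vstar n))).re := fun n => (trace_quad_nonneg hpd _).1
  constructor
  · have : 0 ≤ ∑ n, (Matrix.trace ((V n - Vstar n)ᴴ * B * (V n - Vstar n))).re :=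
      Finset.sum_nonneg fun n _ => hnn n
    linarith
  · intro heq
    have hsum0 : ∑ n, (Matrix.trace ((V n - Vstar n)ᴴ * B * (V n - Vstar n))).re
        = 0 := by linarith
    have hall := (Finset.sum_eq_zero_iff_of_nonneg fun n _ => hnn n).mp hsum0
    funext n
    have hz := (trace_quad_nonneg hpd (V n - Vstar n)).2 (hall n (Finset.mem_univ n))
    exact sub_eq_zero.mp hz
end
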